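/- Let f ≥ 3, let w = (0, w₁, …, w_{f-1}) ∈ ℤ^f with w₀ = 0, and let a = (a₀, …, a_{f-1}) ∈ ℝ^f with all aᵢ ≥ 0. Suppose a·w > 0, and that w₁ is maximal among w₁,…,w_{f-1}. Define a' = (a₀', a₁', 0, …, 0) with a₁' = (a·w)/w₁ and a₀' = -a₁' + a₀ + a₁ + ⋯ + a_{f-1}. Then: (1) a' - a is orthogonal to both the all-ones vector 1 and to w; (2) a₀' ≥ a₀; (3) a₁' > 0; and (4) every entry of a + t(a' - a) is non-negative for all t ∈ [0,1]. -/

import Mathlib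

open Finset

lemma sum_two_support {f : ℕ} [NeZero f] (h01 : (0 : Fin f) ≠ 1) (g : Fin f → ℝ)
    (hg : ∀ i : Fin f, i ≠ 0 → i ≠ 1 → g i = 0) :
    ∑ i, g i = g 0 + g 1 := by
  rw [← Finset.sum_pair h01]
  symm
  apply Finset.sum_subset (Finset.subset_univ _)
  intro i _ hi
  simp only [Finset.mem_insert, Finset.mem_singleton, not_or] at hi
  exact hg i hi.1 hi.2

/-- Key linear-algebra step of the area-shrinking proposition (generic case
`a·w > 0`): with `w₀ = 0`, `a ≥ 0` entrywise, `a·w > 0`, and `w₁` maximal among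
`w₁,…,w_{f-1}`, the vector `a' = (a₀', a₁', 0, …, 0)` with
`a₁' = (a·w)/w₁` and `a₀' = -a₁' + Σᵢ aᵢ` satisfies: `a' - a` is orthogonal to
the all-ones vector and to `w`, `a₀' ≥ a₀`, `a₁' > 0`, and every entry of
`a + t(a' - a)` is non-negative for `t ∈ [0,1]`. -/
theorem stmt_8 (f : ℕ) [NeZero f] (hf : 3 ≤ f)
    (w : Fin f → ℤ) (a : Fin f → ℝ)
    (hw0 : w 0 = 0)
    (ha : ∀ i, 0 ≤ a i)
    (hdot : 0 < ∑ i, a i * (w i : ℝ))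
    (hmax : ∀ j : Fin f, j ≠ 0 → w j ≤ w 1)
    (a' : Fin f → ℝ)
    (ha' : a' = fun i => if i = 0 then
        -((∑ i, a i * (w i : ℝ)) / (w 1 : ℝ)) + ∑ i, a i
      else if i = 1 then (∑ i, a i * (w i : ℝ)) / (w 1 : ℝ) else 0) :
    (∑ i, (a' i - a i)) = 0 ∧
    (∑ i, (a' i - a i) * (w i : ℝ)) = 0 ∧
    a 0 ≤ a' 0 ∧
    0 < a' 1 ∧
    ∀ t ∈ Set.Icc (0 : ℝ) 1, ∀ i, 0 ≤ a i + t * (a' i - a i) := by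
  have h01 : (0 : Fin f) ≠ 1 := by
    intro h
    have := congrArg Fin.val h
    simp [Fin.val_one', Nat.mod_eq_of_lt (by omega : 1 < f)] at this
  set S := ∑ i, a i * (w i : ℝ) with hS
  have hw1 : 0 < (w 1 : ℝ) := by
    by_contra h
    push_neg at h
    have hle : S ≤ 0 := by
      apply Finset.sum_nonpos
      intro i _
      by_cases hi : i = 0
      · simp [hi, hw0]
      · have h1 : (w i : ℝ) ≤ (w 1 : ℝ) := by exact_mod_cast hmax i hi
        exact mul_nonpos_of_nonneg_of_nonpos (ha i) (h1.trans h)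
    linarith
  have ha'0 : a' 0 = -(S / (w 1 : ℝ)) + ∑ i, a i := by simp [ha']
  have ha'1 : a' 1 = S / (w 1 : ℝ) := by simp [ha', h01.symm]
  have ha'rest : ∀ i : Fin f, i ≠ 0 → i ≠ 1 → a' i = 0 := by
    intro i hi0 hi1; simp [ha', hi0, hi1]
  have hsum1 : ∑ i, a' i = ∑ i, a i := by
    rw [sum_two_support h01 a' ha'rest, ha'0, ha'1]; ring
  have hsum2 : ∑ i, a' i * (w i : ℝ) = S := by
    rw [sum_two_support h01 _ (fun i hi0 hi1 => by rw [ha'rest i hi0 hi1, zero_mul]),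
      ha'0, ha'1, hw0]
    push_cast
    field_simp
    ring
  have hdiv : 0 < S / (w 1 : ℝ) := div_pos hdot hw1
  -- a0 ≤ a'0
  have hkey : S ≤ ((∑ i, a i) - a 0) * (w 1 : ℝ) := by
    have h1 : S = ∑ i ∈ Finset.univ.erase 0, a i * (w i : ℝ) := by
      rw [hS, ← Finset.sum_erase_add _ _ (Finset.mem_univ (0 : Fin f)), hw0]
      simp
    have h2 : ∑ i ∈ Finset.univ.erase 0, a i * (w i : ℝ)
        ≤ ∑ i ∈ Finset.univ.erase 0, a i * (w 1 : ℝ) := by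
      apply Finset.sum_le_sum
      intro i hi
      have hi0 : i ≠ 0 := (Finset.mem_erase.mp hi).1
      exact mul_le_mul_of_nonneg_left (by exact_mod_cast hmax i hi0) (ha i)
    have h3 : ∑ i ∈ Finset.univ.erase 0, a i * (w 1 : ℝ)
        = ((∑ i, a i) - a 0) * (w 1 : ℝ) := by
      rw [← Finset.sum_mul]
      congr 1
      rw [Finset.sum_erase_eq_sub (Finset.mem_univ _)]
    linarith [h1 ▸ (h2.trans_eq h3)]
  have h03 : a 0 ≤ a' 0 := by
    rw [ha'0]
    have : S / (w 1 : ℝ) ≤ (∑ i, a i) - a 0 :=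
      (div_le_iff₀ hw1).mpr hkey
    linarith
  refine ⟨by simp [Finset.sum_sub_distrib, hsum1], ?_, h03, ha'1 ▸ hdiv, ?_⟩
  · have : ∑ i, (a' i - a i) * (w i : ℝ)
        = (∑ i, a' i * (w i : ℝ)) - ∑ i, a i * (w i : ℝ) := by
      rw [← Finset.sum_sub_distrib]; congr 1; ext i; ring
    rw [this, hsum2, hS]
    ring
  · intro t ht i
    have ha'nn : 0 ≤ a' i := by
      by_cases hi0 : i = 0
      · rw [hi0]; exact le_trans (ha 0) h03
      · by_cases hi1 : i = 1
        · rw [hi1, ha'1]; exact hdiv.le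
        · rw [ha'rest i hi0 hi1]
    have h1 : 0 ≤ (1 - t) * a i := mul_nonneg (by linarith [ht.2]) (ha i)
    have h2 : 0 ≤ t * a' i := mul_nonneg ht.1 ha'nn
    nlinarith
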